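/- Define T_n(x) = Σ_{k=1}^n T(n,k) x^k where T(n,k) satisfies T(1,1)=1, T(n,k) = (2k-1)T(n-1,k) + 3T(n-1,k-1) + (2n-2k+2)T(n-1,k-2). Define t_m(x) = (1+x)(1-x²)^{k-1} if m = 2k-1 and t_m(x) = -(1-x²)^k if m = 2k. Then for n ≥ 1: T_n(x) = (x/(1+x))·t_n(x) + Σ_{r=2}^{n} C(n, r-1) t_{n-r+1}(x) T_{r-1}(x), as an identity of rational functions (equivalently, (1+x)T_n(x) = x·t_n(x) + (1+x)Σ_{r=2}^{n} C(n,r-1) t_{n-r+1}(x) T_{r-1}(x)). -/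

import Mathlib

open Polynomial Finset

/-- Recurrence for the type `B` alternating run polynomials: with `T 1 = x`,
`T_{n+1} = (2nx²+3x-1)T_n + 2x(1-x²)T_n'`, and
`t_{2k-1} = (1+x)(1-x²)^{k-1}`, `t_{2k} = -(1-x²)^k`, one has for `n ≥ 1`
`(1+x)·T_n(x) = x·t_n(x) + (1+x)·Σ_{r=2}^{n} C(n, r-1) t_{n-r+1}(x) T_{r-1}(x)`. -/
theorem typeB_run_recurrence (T : ℕ → Polynomial ℝ) (h1 : T 1 = X)
    (hrec : ∀ n : ℕ, 1 ≤ n → T (n + 1) =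
      (2 * (n : Polynomial ℝ) * X ^ 2 + 3 * X - 1) * T n + 2 * X * (1 - X ^ 2) * derivative (T n))
    (t : ℕ → Polynomial ℝ)
    (ht : ∀ k : ℕ, 1 ≤ k →
      t (2 * k - 1) = (1 + X) * (1 - X ^ 2) ^ (k - 1) ∧ t (2 * k) = -(1 - X ^ 2) ^ k)
    (n : ℕ) (hn : 1 ≤ n) :
    (1 + X) * T n = X * t n +
      (1 + X) * ∑ r ∈ Finset.Icc 2 n,
        (n.choose (r - 1) : Polynomial ℝ) * t (n - r + 1) * T (r - 1) := by
  have ht1 : t 1 = 1 + X := by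
    have h := (ht 1 le_rfl).1
    norm_num at h
    exact h
  have hne : (1 + X : ℝ[X]) ≠ 0 := by
    intro h
    have := congrArg (eval 0) h
    simp at this
  -- key differential relation for t
  have R1 : ∀ m : ℕ, 1 ≤ m →
      2 * (m : ℝ[X]) * X ^ 2 * t m + 2 * X * (1 - X ^ 2) * derivative (t m)
        = (1 + X) * t m + t (m + 1) := by
    intro m hm
    rcases Nat.even_or_odd m with hme | hmo
    · obtain ⟨k, hk⟩ := hme
      obtain ⟨k', rfl⟩ : ∃ k', k = k' + 1 := ⟨k - 1, by omega⟩
      have e1 : m = 2 * (k' + 1) := by omega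
      subst e1
      have hA := (ht (k' + 1) (by omega)).2
      have hB := (ht (k' + 2) (by omega)).1
      have e2 : 2 * (k' + 1) + 1 = 2 * (k' + 2) - 1 := by omega
      have e3 : (k' + 2) - 1 = k' + 1 := by omega
      rw [e2, hB, e3, hA]
      rw [derivative_neg, derivative_pow]
      simp only [Nat.add_sub_cancel, derivative_sub, derivative_one, derivative_X_pow,
        map_add, map_one, map_natCast, map_ofNat]
      push_cast
      ring
    · obtain ⟨k, hk⟩ := hmo
      subst hk
      have e2 : 2 * k + 1 = 2 * (k + 1) - 1 := by omega
      have e3 : (k + 1) - 1 = k := by omega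
      have hA := (ht (k + 1) (by omega)).1
      rw [e3] at hA
      have hB := (ht (k + 1) (by omega)).2
      have e4 : 2 * k + 1 + 1 = 2 * (k + 1) := by omega
      rw [← e2] at hA
      rw [← e4] at hB
      rw [hA, hB]
      rcases Nat.eq_zero_or_pos k with hk0 | hk1
      · subst hk0
        rw [pow_zero]
        simp only [derivative_mul, derivative_add, derivative_one, derivative_X, mul_one,
          derivative_one]
        push_cast
        ring
      · obtain ⟨k'', rfl⟩ : ∃ k'', k = k'' + 1 := ⟨k - 1, by omega⟩
        rw [derivative_mul, derivative_pow]
        simp only [Nat.add_sub_cancel, derivative_add, derivative_one, derivative_X,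
          derivative_sub, derivative_X_pow, map_add, map_one, map_natCast, map_ofNat]
        push_cast
        ring
  have key : ∀ n : ℕ, 1 ≤ n → (1 + X) * T n = X * t n +
      (1 + X) * ∑ j ∈ Icc 1 (n - 1), (n.choose j : ℝ[X]) * t (n - j) * T j := by
    intro n hn
    induction n, hn using Nat.le_induction with
    | base =>
      rw [show (1:ℕ) - 1 = 0 from rfl]
      rw [show Finset.Icc 1 0 = ∅ from rfl, Finset.sum_empty, h1, ht1]
      ring
    | succ n hn IH =>
      obtain ⟨m, rfl⟩ : ∃ m, n = m + 1 := ⟨n - 1, by omega⟩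
      simp only [Nat.add_sub_cancel] at IH ⊢
      set S := ∑ j ∈ Icc 1 m, ((m + 1).choose j : ℝ[X]) * t (m + 1 - j) * T j with hS
      have F2 : T (m + 1) + (1 + X) * derivative (T (m + 1))
          = t (m + 1) + X * derivative (t (m + 1)) + S + (1 + X) * derivative S := by
        have hd := congrArg derivative IH
        simp only [derivative_mul, derivative_add, derivative_one, derivative_X,
          zero_add, one_mul] at hd
        linear_combination hd
      have HSUM : 2 * X * (1 - X ^ 2) * derivative S
          = ((1 + X) - (2 * ((m : ℝ[X]) + 1) * X ^ 2 + 3 * X - 1)) * S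
            + (∑ j ∈ Icc 1 m, ((m + 1).choose j : ℝ[X]) * t (m + 1 + 1 - j) * T j)
            + (∑ j ∈ Icc 1 m, ((m + 1).choose j : ℝ[X]) * t (m + 1 - j) * T (j + 1)) := by
        rw [hS, derivative_sum, Finset.mul_sum, Finset.mul_sum,
          ← Finset.sum_add_distrib, ← Finset.sum_add_distrib]
        apply Finset.sum_congr rfl
        intro j hj
        simp only [mem_Icc] at hj
        have R1j := R1 (m + 1 - j) (by omega)
        have hc : ((m + 1 - j : ℕ) : ℝ[X]) = (m : ℝ[X]) + 1 - j := by
          rw [Nat.cast_sub (by omega : j ≤ m + 1)]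
          push_cast
          ring
        have e : m + 1 - j + 1 = m + 1 + 1 - j := by omega
        rw [hc, e] at R1j
        have hrj := hrec j hj.1
        rw [derivative_mul, derivative_mul, derivative_natCast]
        linear_combination (((m + 1).choose j : ℝ[X]) * T j) * R1j
          - (((m + 1).choose j : ℝ[X]) * t (m + 1 - j)) * hrj
      have HSPLIT : (∑ j ∈ Icc 1 (m + 1), ((m + 1 + 1).choose j : ℝ[X]) * t (m + 1 + 1 - j) * T j)
          = (∑ j ∈ Icc 1 m, ((m + 1).choose j : ℝ[X]) * t (m + 1 + 1 - j) * T j)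
            + (∑ j ∈ Icc 1 m, ((m + 1).choose j : ℝ[X]) * t (m + 1 - j) * T (j + 1))
            + (1 + X) * T (m + 1) + X * t (m + 1) := by
        have hPascal : ∀ j ∈ Icc 1 (m + 1),
            ((m + 1 + 1).choose j : ℝ[X]) * t (m + 1 + 1 - j) * T j
            = ((m + 1).choose j : ℝ[X]) * t (m + 1 + 1 - j) * T j
              + ((m + 1).choose (j - 1) : ℝ[X]) * t (m + 1 + 1 - j) * T j := by
          intro j hj
          simp only [mem_Icc] at hj
          obtain ⟨i, rfl⟩ : ∃ i, j = i + 1 := ⟨j - 1, by omega⟩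
          rw [Nat.choose_succ_succ, show i + 1 - 1 = i from rfl]
          push_cast
          ring
        rw [Finset.sum_congr rfl hPascal, Finset.sum_add_distrib]
        have hTop : (∑ j ∈ Icc 1 (m + 1), ((m + 1).choose j : ℝ[X]) * t (m + 1 + 1 - j) * T j)
            = (∑ j ∈ Icc 1 m, ((m + 1).choose j : ℝ[X]) * t (m + 1 + 1 - j) * T j)
              + (1 + X) * T (m + 1) := by
          rw [Finset.sum_Icc_succ_top (by omega : 1 ≤ m + 1)]
          have : m + 1 + 1 - (m + 1) = 1 := by omega
          rw [this, Nat.choose_self, ht1]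
          push_cast
          ring
        have hBot : (∑ j ∈ Icc 1 (m + 1), ((m + 1).choose (j - 1) : ℝ[X]) * t (m + 1 + 1 - j) * T j)
            = X * t (m + 1)
              + (∑ j ∈ Icc 1 m, ((m + 1).choose j : ℝ[X]) * t (m + 1 - j) * T (j + 1)) := by
          have hins : Icc 1 (m + 1) = insert 1 ((Icc 1 m).map (addRightEmbedding 1)) := by
            ext a
            simp only [Finset.mem_insert, Finset.mem_map, Finset.mem_Icc,
              addRightEmbedding_apply]
            constructor
            · rintro ⟨ha1, ha2⟩
              rcases eq_or_lt_of_le ha1 with h | h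
              · exact Or.inl h.symm
              · exact Or.inr ⟨a - 1, ⟨by omega, by omega⟩, by omega⟩
            · rintro (rfl | ⟨b, ⟨hb1, hb2⟩, rfl⟩) <;> omega
          rw [hins, Finset.sum_insert (by simp)]
          rw [Finset.sum_map]
          have hterm : ∀ j ∈ Icc 1 m,
              ((m + 1).choose ((addRightEmbedding 1 j) - 1) : ℝ[X])
                * t (m + 1 + 1 - (addRightEmbedding 1 j)) * T (addRightEmbedding 1 j)
              = ((m + 1).choose j : ℝ[X]) * t (m + 1 - j) * T (j + 1) := by
            intro j hj
            simp only [mem_Icc] at hj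
            simp only [addRightEmbedding_apply]
            have e1 : j + 1 - 1 = j := by omega
            have e2 : m + 1 + 1 - (j + 1) = m + 1 - j := by omega
            rw [e1, e2]
          rw [Finset.sum_congr rfl hterm]
          norm_num [h1]
          ring
        rw [hTop, hBot]
        ring
      have h0 := hrec (m + 1) (by omega)
      have R1n := R1 (m + 1) (by omega)
      push_cast at h0 R1n
      apply mul_left_cancel₀ hne
      linear_combination (1 + X) ^ 2 * h0
        + (1 + X) * (2 * ((m : ℝ[X]) + 1) * X ^ 2 + 2 * X ^ 2 - 2) * IH
        + 2 * X * (1 - X ^ 2) * (1 + X) * F2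
        + X * (1 + X) * R1n
        + (1 + X) ^ 2 * HSUM
        - (1 + X) ^ 2 * HSPLIT
  have hsum : ∑ r ∈ Finset.Icc 2 n, (n.choose (r - 1) : ℝ[X]) * t (n - r + 1) * T (r - 1)
      = ∑ j ∈ Icc 1 (n - 1), (n.choose j : ℝ[X]) * t (n - j) * T j := by
    have h2 : Finset.Icc 2 n = (Icc 1 (n - 1)).map (addRightEmbedding 1) := by
      rw [Finset.map_add_right_Icc]
      congr 1
      omega
    rw [h2, Finset.sum_map]
    apply Finset.sum_congr rfl
    intro j hj
    simp only [mem_Icc] at hj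
    simp only [addRightEmbedding_apply]
    have e1 : j + 1 - 1 = j := by omega
    have e2 : n - (j + 1) + 1 = n - j := by omega
    rw [e1, e2]
  rw [hsum]
  exact key n hn
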